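/- Let n = 8. Then a_0 = 1, a_1 = 0, a_2 = 1, a_3 = 0, a_4 = 3, and the dimensions satisfy the linear recurrence a_{m+4} = 6·a_{m+2} − 8·a_m for every integer m ≥ 1. (Equivalently, the Hilbert series of ℂ⟨u,v⟩^{D_{16}} is (5t⁴−5t²+1)/(8t⁴−6t²+1).) -/

import Mathlib

open scoped Real

noncomputable section

/-- Words in two letters. -/
abbrev FW := FreeMonoid (Fin 2)

/-- The free associative unital ℂ-algebra on two generators. -/
abbrev FA := MonoidAlgebra ℂ FW

/-- The generator `u`. -/
def gu : FA := MonoidAlgebra.of ℂ FW (FreeMonoid.of 0)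

/-- The generator `v`. -/
def gv : FA := MonoidAlgebra.of ℂ FW (FreeMonoid.of 1)

/-- The algebra endomorphism `ρ` with `ρ(u) = ξ u`, `ρ(v) = ξ⁻¹ v`, `ξ = exp(2πi/n)`. -/
def dRho (n : ℕ) : FA →ₐ[ℂ] FA :=
  MonoidAlgebra.lift ℂ FA FW
    (FreeMonoid.lift fun i : Fin 2 =>
      if i = 0 then Complex.exp (2 * Real.pi * Complex.I / n) • gu
      else (Complex.exp (2 * Real.pi * Complex.I / n))⁻¹ • gv)

/-- The algebra endomorphism `τ` exchanging `u` and `v`. -/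
def dTau : FA →ₐ[ℂ] FA :=
  MonoidAlgebra.lift ℂ FA FW
    (FreeMonoid.lift fun i : Fin 2 => if i = 0 then gv else gu)

/-- The invariant algebra `ℂ⟨u,v⟩^{D_{2n}}`. -/
def invAlg (n : ℕ) : Subalgebra ℂ FA :=
  AlgHom.equalizer (dRho n) (AlgHom.id ℂ FA) ⊓ AlgHom.equalizer dTau (AlgHom.id ℂ FA)

/-- The degree-`j` homogeneous component of `ℂ⟨u,v⟩`: the span of words of length `j`. -/
def degComp (j : ℕ) : Submodule ℂ FA :=
  (Finsupp.supported ℂ ℂ {w : FW | FreeMonoid.length w = j}).comap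
    (MonoidAlgebra.coeffLinearEquiv ℂ).toLinearMap

/-- `a_j`: the dimension of the degree-`j` homogeneous component of the invariant algebra. -/
def aDim (n j : ℕ) : ℕ :=
  Module.finrank ℂ ↥((invAlg n).toSubmodule ⊓ degComp j)

namespace DA

def xi : ℂ := Complex.exp (2 * Real.pi * Complex.I / (8:ℕ))

lemma xi_prim : IsPrimitiveRoot xi 8 := by
  simpa [xi] using Complex.isPrimitiveRoot_exp 8 (by norm_num)

lemma xi_ne_zero : xi ≠ 0 := Complex.exp_ne_zero _

def chi (i : Fin 2) : ℤ := if i = 0 then 1 else -1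

def iwt (l : List (Fin 2)) : ℤ := (l.map chi).sum

@[simp] lemma iwt_nil : iwt [] = 0 := rfl
@[simp] lemma iwt_cons (a : Fin 2) (l : List (Fin 2)) : iwt (a :: l) = chi a + iwt l := by
  simp [iwt]

lemma prod_g (l : List (Fin 2)) :
    ((l.map fun i : Fin 2 =>
      if i = 0 then Complex.exp (2 * Real.pi * Complex.I / (8:ℕ)) • gu
      else (Complex.exp (2 * Real.pi * Complex.I / (8:ℕ)))⁻¹ • gv).prod : FA)
      = MonoidAlgebra.single (FreeMonoid.ofList l) (xi ^ (iwt l)) := by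
  induction l with
  | nil => simp [MonoidAlgebra.one_def, FreeMonoid.ofList_nil]
  | cons a l ih =>
    rw [List.map_cons, List.prod_cons, ih]
    have hxi : (Complex.exp (2 * Real.pi * Complex.I / (8:ℕ))) = xi := rfl
    fin_cases a
    · rw [show ((fun i => i) (⟨0, by norm_num⟩ : Fin 2)) = (0 : Fin 2) from rfl, if_pos rfl, gu, MonoidAlgebra.of_apply, MonoidAlgebra.smul_single', mul_one,
        MonoidAlgebra.single_mul_single, ← FreeMonoid.ofList_cons, iwt_cons]
      congr 1
      show xi * xi ^ iwt l = xi ^ ((1:ℤ) + iwt l)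
      rw [zpow_add₀ xi_ne_zero, zpow_one]
    · rw [show ((fun i => i) (⟨1, by norm_num⟩ : Fin 2)) = (1 : Fin 2) from rfl, if_neg (by decide), gv, MonoidAlgebra.of_apply, MonoidAlgebra.smul_single', mul_one,
        MonoidAlgebra.single_mul_single, ← FreeMonoid.ofList_cons, iwt_cons]
      congr 1
      show xi⁻¹ * xi ^ iwt l = xi ^ ((-1:ℤ) + iwt l)
      rw [zpow_add₀ xi_ne_zero, zpow_neg_one]

end DA

namespace DA

instance : DecidableEq FW := fun a b =>
  decidable_of_iff (FreeMonoid.toList a = FreeMonoid.toList b) FreeMonoid.toList.injective.eq_iff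

def sw (i : Fin 2) : Fin 2 := if i = 0 then 1 else 0

@[simp] lemma sw_sw (i : Fin 2) : sw (sw i) = i := by fin_cases i <;> decide

def swapW (w : FW) : FW := FreeMonoid.map sw w

@[simp] lemma swapW_swapW (w : FW) : swapW (swapW w) = w := by
  apply FreeMonoid.toList.injective
  simp [swapW, FreeMonoid.toList_map, List.map_map, Function.comp_def]

lemma prod_g' (l : List (Fin 2)) :
    ((l.map fun i : Fin 2 => if i = 0 then gv else gu).prod : FA)
      = MonoidAlgebra.single (FreeMonoid.ofList (l.map sw)) 1 := by
  induction l with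
  | nil => simp [MonoidAlgebra.one_def, FreeMonoid.ofList_nil]
  | cons a l ih =>
    rw [List.map_cons, List.prod_cons, ih, List.map_cons, FreeMonoid.ofList_cons]
    fin_cases a
    · rw [show ((fun i => i) (⟨0, by norm_num⟩ : Fin 2)) = (0 : Fin 2) from rfl, if_pos rfl, gv,
        MonoidAlgebra.of_apply, MonoidAlgebra.single_mul_single, one_mul]
      rfl
    · rw [show ((fun i => i) (⟨1, by norm_num⟩ : Fin 2)) = (1 : Fin 2) from rfl, if_neg (by decide), gu,
        MonoidAlgebra.of_apply, MonoidAlgebra.single_mul_single, one_mul]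
      rfl

lemma dRho_single (w : FW) (c : ℂ) :
    dRho 8 (MonoidAlgebra.single w c) = MonoidAlgebra.single w (xi ^ iwt (FreeMonoid.toList w) * c) := by
  have h1 : (MonoidAlgebra.single w c : FA) = c • MonoidAlgebra.single w 1 := by
    rw [MonoidAlgebra.smul_single', mul_one]
  rw [h1, map_smul, dRho, MonoidAlgebra.lift_single, one_smul, FreeMonoid.lift_apply]
  rw [prod_g, FreeMonoid.ofList_toList, MonoidAlgebra.smul_single', mul_comm]

lemma dTau_single (w : FW) (c : ℂ) :
    dTau (MonoidAlgebra.single w c) = MonoidAlgebra.single (swapW w) c := by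
  have h1 : (MonoidAlgebra.single w c : FA) = c • MonoidAlgebra.single w 1 := by
    rw [MonoidAlgebra.smul_single', mul_one]
  have h2 : (MonoidAlgebra.single (swapW w) c : FA) = c • MonoidAlgebra.single (swapW w) 1 := by
    rw [MonoidAlgebra.smul_single', mul_one]
  rw [h1, h2, map_smul, dTau, MonoidAlgebra.lift_single, one_smul, FreeMonoid.lift_apply, prod_g']
  rfl

lemma dRho_apply (f : FA) (w : FW) :
    (dRho 8 f).coeff w = xi ^ iwt (FreeMonoid.toList w) * f.coeff w := by
  conv_lhs => rw [← MonoidAlgebra.sum_coeff_single f]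
  rw [map_finsuppSum]
  simp only [dRho_single]
  rw [MonoidAlgebra.coeff_finsuppSum, Finsupp.sum_apply]
  have : (f.coeff.sum fun a b => (MonoidAlgebra.single a (xi ^ iwt (FreeMonoid.toList a) * b) : FA).coeff w)
      = f.coeff.sum fun a b => if a = w then xi ^ iwt (FreeMonoid.toList a) * b else 0 := by
    apply Finsupp.sum_congr
    intro a _
    rw [MonoidAlgebra.coeff_single_apply]
  rw [this, Finsupp.sum_ite_eq' f.coeff w (fun a b => xi ^ iwt (FreeMonoid.toList a) * b)]
  split
  · rfl
  · rw [Finsupp.notMem_support_iff.mp (by assumption), mul_zero]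

lemma dTau_apply (f : FA) (w : FW) : (dTau f).coeff w = f.coeff (swapW w) := by
  conv_lhs => rw [← MonoidAlgebra.sum_coeff_single f]
  rw [map_finsuppSum]
  simp only [dTau_single]
  rw [MonoidAlgebra.coeff_finsuppSum, Finsupp.sum_apply]
  have : (f.coeff.sum fun a b => (MonoidAlgebra.single (swapW a) b : FA).coeff w)
      = f.coeff.sum fun a b => if a = swapW w then b else 0 := by
    apply Finsupp.sum_congr
    intro a _
    rw [MonoidAlgebra.coeff_single_apply]
    have : swapW a = w ↔ a = swapW w := by
      constructor
      · rintro rfl; rw [swapW_swapW]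
      · rintro rfl; rw [swapW_swapW]
    simp only [this]
  rw [this, Finsupp.sum_ite_eq' f.coeff (swapW w) (fun _ b => b)]
  split
  · rfl
  · exact (Finsupp.notMem_support_iff.mp (by assumption)).symm

end DA

namespace DA

lemma toList_swapW (w : FW) : FreeMonoid.toList (swapW w) = (FreeMonoid.toList w).map sw := rfl

lemma length_eq (w : FW) : FreeMonoid.length w = (FreeMonoid.toList w).length := rfl

lemma iwt_map_sw (l : List (Fin 2)) : iwt (l.map sw) = - iwt l := by
  induction l with
  | nil => simp
  | cons a l ih =>
    rw [List.map_cons, iwt_cons, iwt_cons, ih]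
    have : chi (sw a) = - chi a := by fin_cases a <;> decide
    rw [this]; ring

lemma mem_V_iff (j : ℕ) (f : FA) :
    f ∈ (invAlg 8).toSubmodule ⊓ degComp j ↔
      (∀ w : FW, f.coeff w ≠ 0 → (FreeMonoid.length w = j ∧ (8:ℤ) ∣ iwt (FreeMonoid.toList w))) ∧
      (∀ w : FW, f.coeff (swapW w) = f.coeff w) := by
  rw [Submodule.mem_inf, Subalgebra.mem_toSubmodule, invAlg, Algebra.mem_inf,
    AlgHom.mem_equalizer, AlgHom.mem_equalizer]
  show ((dRho 8) f = f ∧ dTau f = f) ∧ f ∈ degComp j ↔ _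
  have hrho : dRho 8 f = f ↔ ∀ w : FW, f.coeff w ≠ 0 → (8:ℤ) ∣ iwt (FreeMonoid.toList w) := by
    rw [← MonoidAlgebra.coeff_inj, Finsupp.ext_iff]
    constructor
    · intro h w hw
      have := h w
      rw [dRho_apply] at this
      have hxi : xi ^ iwt (FreeMonoid.toList w) = 1 := by
        have h1 : xi ^ iwt (FreeMonoid.toList w) * f.coeff w = 1 * f.coeff w := by
          rw [one_mul]; exact this
        exact mul_right_cancel₀ hw h1
      exact (xi_prim.zpow_eq_one_iff_dvd _).mp hxi
    · intro h w
      rw [dRho_apply]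
      by_cases hw : f.coeff w = 0
      · rw [hw, mul_zero]
      · rw [(xi_prim.zpow_eq_one_iff_dvd _).mpr (h w hw), one_mul]
  have htau : dTau f = f ↔ ∀ w : FW, f.coeff (swapW w) = f.coeff w := by
    rw [← MonoidAlgebra.coeff_inj, Finsupp.ext_iff]
    constructor
    · intro h w
      have := h (swapW w)
      rw [dTau_apply, swapW_swapW] at this
      exact this.symm
    · intro h w
      rw [dTau_apply, h]
  have hdeg : f ∈ degComp j ↔ ∀ w : FW, f.coeff w ≠ 0 → FreeMonoid.length w = j := by
    rw [degComp, Submodule.mem_comap, Finsupp.mem_supported]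
    change (↑f.coeff.support : Set FW) ⊆ {w : FW | FreeMonoid.length w = j} ↔ _
    constructor
    · intro h w hw
      exact h (Finsupp.mem_support_iff.mpr hw)
    · intro h w hw
      exact h w (Finsupp.mem_support_iff.mp hw)
  rw [hrho, htau, hdeg]
  constructor
  · rintro ⟨⟨h1, h2⟩, h3⟩
    exact ⟨fun w hw => ⟨h3 w hw, h1 w hw⟩, h2⟩
  · rintro ⟨h1, h2⟩
    exact ⟨⟨fun w hw => (h1 w hw).2, h2⟩, fun w hw => (h1 w hw).1⟩

end DA

namespace DA

def Tset (j : ℕ) : Set FW :=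
  {w | FreeMonoid.length w = j ∧ (8:ℤ) ∣ iwt (FreeMonoid.toList w) ∧
    (FreeMonoid.toList w).head? ≠ some 1}

def bas (w : FW) : FA := MonoidAlgebra.single w 1 + MonoidAlgebra.single (swapW w) 1

lemma bas_apply (w u : FW) :
    (bas w).coeff u = (if w = u then (1:ℂ) else 0) + (if swapW w = u then (1:ℂ) else 0) := by
  rw [bas, MonoidAlgebra.coeff_add, Finsupp.add_apply]
  rw [MonoidAlgebra.coeff_single_apply, MonoidAlgebra.coeff_single_apply]

lemma swapW_injective : Function.Injective swapW := by
  intro a b h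
  have := congrArg swapW h
  rwa [swapW_swapW, swapW_swapW] at this

lemma length_swapW (w : FW) : FreeMonoid.length (swapW w) = FreeMonoid.length w := by
  rw [length_eq, length_eq, toList_swapW, List.length_map]

lemma head_swapW (w : FW) : (FreeMonoid.toList (swapW w)).head? =
    ((FreeMonoid.toList w).head?).map sw := by
  rw [toList_swapW, List.head?_map]

lemma swapW_eq_of_heads {j : ℕ} {a b : FW} (ha : a ∈ Tset j) (hb : b ∈ Tset j)
    (h : swapW a = b) : a = b := by
  rcases hl : FreeMonoid.toList a with _ | ⟨x, l⟩
  · have ha1 : a = FreeMonoid.ofList [] := by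
      rw [← hl, FreeMonoid.ofList_toList]
    have : swapW a = a := by
      apply FreeMonoid.toList.injective
      rw [toList_swapW, hl]
      rfl
    rw [← h, this]
  · exfalso
    have hx : x = 0 := by
      have := ha.2.2
      rw [hl] at this
      fin_cases x
      · rfl
      · simp at this
    have : (FreeMonoid.toList b).head? = some 1 := by
      rw [← h, head_swapW, hl, hx]
      rfl
    exact hb.2.2 this

lemma bas_mem {j : ℕ} (w : FW) (h1 : FreeMonoid.length w = j)
    (h2 : (8:ℤ) ∣ iwt (FreeMonoid.toList w)) :
    bas w ∈ (invAlg 8).toSubmodule ⊓ degComp j := by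
  rw [mem_V_iff]
  constructor
  · intro u hu
    rw [bas_apply] at hu
    have : w = u ∨ swapW w = u := by
      by_contra hc
      push_neg at hc
      rw [if_neg hc.1, if_neg hc.2, add_zero] at hu
      exact hu rfl
    rcases this with rfl | rfl
    · exact ⟨h1, h2⟩
    · refine ⟨by rw [length_swapW, h1], ?_⟩
      rw [toList_swapW, iwt_map_sw]
      exact dvd_neg.mpr h2
  · intro u
    rw [bas_apply, bas_apply]
    have e1 : (w = swapW u) ↔ (swapW w = u) := by
      constructor
      · rintro rfl; rw [swapW_swapW]
      · rintro rfl; rw [swapW_swapW]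
    have e2 : (swapW w = swapW u) ↔ (w = u) := swapW_injective.eq_iff
    simp only [e1, e2]
    ring

end DA

namespace DA

lemma span_le_V (j : ℕ) :
    Submodule.span ℂ (bas '' Tset j) ≤ (invAlg 8).toSubmodule ⊓ degComp j := by
  rw [Submodule.span_le]
  rintro _ ⟨w, hw, rfl⟩
  exact bas_mem w hw.1 hw.2.1

lemma V_le_span (j : ℕ) :
    (invAlg 8).toSubmodule ⊓ degComp j ≤ Submodule.span ℂ (bas '' Tset j) := by
  suffices h : ∀ (n : ℕ) (f : FA), f.coeff.support.card ≤ n →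
      f ∈ (invAlg 8).toSubmodule ⊓ degComp j → f ∈ Submodule.span ℂ (bas '' Tset j) by
    intro f hf
    exact h f.coeff.support.card f le_rfl hf
  intro n
  induction n with
  | zero =>
    intro f hcard _
    have : f = 0 := by
      rw [← MonoidAlgebra.coeff_eq_zero, ← Finsupp.support_eq_empty]
      exact Finset.card_eq_zero.mp (Nat.le_zero.mp hcard)
    rw [this]
    exact Submodule.zero_mem _
  | succ n ih =>
    intro f hcard hf
    by_cases h0 : f = 0
    · rw [h0]; exact Submodule.zero_mem _
    obtain ⟨w₀, hw₀⟩ := Finsupp.support_nonempty_iff.mpr (fun hh => h0 (MonoidAlgebra.coeff_eq_zero.mp hh))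
    rw [Finsupp.mem_support_iff] at hw₀
    set r : FW := if (FreeMonoid.toList w₀).head? = some 1 then swapW w₀ else w₀ with hr
    obtain ⟨hfW, hsym⟩ := (mem_V_iff j f).mp hf
    have hfr : f.coeff r = f.coeff w₀ := by
      rw [hr]
      split
      · exact hsym w₀
      · rfl
    have hfr0 : f.coeff r ≠ 0 := by rw [hfr]; exact hw₀
    have hrT : r ∈ Tset j := by
      refine ⟨(hfW r hfr0).1, (hfW r hfr0).2, ?_⟩
      rw [hr]
      split
      · rename_i hh
        rw [head_swapW]
        rcases hl : (FreeMonoid.toList w₀).head? with _ | x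
        · simp
        · rw [hl] at hh
          have : x = 1 := by injection hh
          subst this
          intro hc
          have : sw 1 = 1 := by injection hc
          exact absurd this (by decide)
      · assumption
    set c : ℂ := if swapW r = r then f.coeff r / 2 else f.coeff r with hc
    set g : FA := f - c • bas r with hg
    have hbr : bas r ∈ (invAlg 8).toSubmodule ⊓ degComp j := bas_mem r hrT.1 hrT.2.1
    have hgV : g ∈ (invAlg 8).toSubmodule ⊓ degComp j :=
      Submodule.sub_mem _ hf (Submodule.smul_mem _ _ hbr)
    have hgr : g.coeff r = 0 := by
      rw [hg, MonoidAlgebra.coeff_sub, Finsupp.sub_apply, MonoidAlgebra.coeff_smul, Finsupp.smul_apply, bas_apply, if_pos rfl, hc]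
      split <;> (simp only [smul_eq_mul]; ring)
    have hgsr : g.coeff (swapW r) = 0 := by
      by_cases hh : swapW r = r
      · rw [hh]; exact hgr
      · have h1 : r ≠ swapW r := fun hcc => hh hcc.symm
        rw [hg, MonoidAlgebra.coeff_sub, Finsupp.sub_apply, MonoidAlgebra.coeff_smul, Finsupp.smul_apply, bas_apply, if_neg h1, if_pos rfl,
          hc, if_neg hh, hsym r]
        simp only [smul_eq_mul]
        ring
    have hgother : ∀ u : FW, u ≠ r → u ≠ swapW r → g.coeff u = f.coeff u := by
      intro u h1 h2
      rw [hg, MonoidAlgebra.coeff_sub, Finsupp.sub_apply, MonoidAlgebra.coeff_smul, Finsupp.smul_apply, bas_apply,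
        if_neg (fun hcc => h1 hcc.symm), if_neg (fun hcc => h2 hcc.symm)]
      simp
    have hsup : g.coeff.support ⊆ f.coeff.support.erase r := by
      intro u hu
      rw [Finsupp.mem_support_iff] at hu
      have hur : u ≠ r := fun hh => hu (hh ▸ hgr)
      have husr : u ≠ swapW r := fun hh => hu (hh ▸ hgsr)
      rw [Finset.mem_erase, Finsupp.mem_support_iff]
      exact ⟨hur, fun hh => hu ((hgother u hur husr).trans hh)⟩
    have hcard' : g.coeff.support.card ≤ n := by
      have h1 : (f.coeff.support.erase r).card < f.coeff.support.card :=
        Finset.card_erase_lt_of_mem (Finsupp.mem_support_iff.mpr hfr0)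
      have := Finset.card_le_card hsup
      omega
    have hgspan := ih g hcard' hgV
    have : f = g + c • bas r := by rw [hg, sub_add_cancel]
    rw [this]
    exact Submodule.add_mem _ hgspan
      (Submodule.smul_mem _ _ (Submodule.subset_span ⟨r, hrT, rfl⟩))

end DA

namespace DA

lemma tset_finite (j : ℕ) : (Tset j).Finite := by
  have h : (Tset j) ⊆ FreeMonoid.toList ⁻¹' {l : List (Fin 2) | l.length = j} := by
    intro w hw
    have := hw.1
    rw [length_eq] at this
    exact this
  exact ((List.finite_length_eq (Fin 2) j).preimage
    (FreeMonoid.toList.injective.injOn)).subset h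

lemma bas_indep (j : ℕ) : LinearIndependent ℂ (fun w : ↥(Tset j) => bas ↑w) := by
  rw [linearIndependent_iff']
  intro s g hsum i₀ hi₀
  have happ := congrArg (fun φ : FA => φ.coeff ↑i₀) hsum
  simp only [MonoidAlgebra.coeff_zero, Finsupp.coe_zero, Pi.zero_apply] at happ
  rw [MonoidAlgebra.coeff_sum, Finsupp.finset_sum_apply] at happ
  have hterm : ∀ i ∈ s, i ≠ i₀ → (g i • bas ↑i).coeff (↑i₀ : FW) = 0 := by
    intro i _ hne
    rw [MonoidAlgebra.coeff_smul, Finsupp.smul_apply, bas_apply]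
    have h1 : (↑i : FW) ≠ ↑i₀ := fun hh => hne (Subtype.ext hh)
    have h2 : swapW ↑i ≠ (↑i₀ : FW) := by
      intro hh
      exact h1 (swapW_eq_of_heads i.2 i₀.2 hh)
    rw [if_neg h1, if_neg h2, add_zero]
    simp
  rw [Finset.sum_eq_single i₀ hterm (fun h => absurd hi₀ h)] at happ
  rw [MonoidAlgebra.coeff_smul, Finsupp.smul_apply, bas_apply, if_pos rfl] at happ
  by_cases hh : swapW (↑i₀ : FW) = ↑i₀
  · rw [if_pos hh] at happ
    simp only [smul_eq_mul] at happ
    have : g i₀ * 2 = 0 := by linear_combination happ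
    simpa using this
  · rw [if_neg hh] at happ
    simpa using happ

lemma aDim_eq_card (j : ℕ) : aDim 8 j = Nat.card ↥(Tset j) := by
  classical
  have hfin := tset_finite j
  haveI : Fintype ↥(Tset j) := hfin.fintype
  have hspan : (invAlg 8).toSubmodule ⊓ degComp j
      = Submodule.span ℂ (Set.range fun w : ↥(Tset j) => bas ↑w) := by
    rw [← Set.image_eq_range]
    exact le_antisymm (V_le_span j) (span_le_V j)
  rw [aDim, hspan, finrank_span_eq_card (bas_indep j), Nat.card_eq_fintype_card]

end DA

namespace DA

def wS (j : ℕ) (r : ZMod 8) : Set (List (Fin 2)) :=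
  {l | l.length = j ∧ ((iwt l : ℤ) : ZMod 8) = r}

def tS (j : ℕ) : Set (List (Fin 2)) :=
  {l | l.length = j ∧ ((iwt l : ℤ) : ZMod 8) = 0 ∧ l.head? ≠ some 1}

def cnt (j : ℕ) (r : ZMod 8) : ℕ := (wS j r).ncard

lemma wS_finite (j : ℕ) (r : ZMod 8) : (wS j r).Finite :=
  (List.finite_length_eq (Fin 2) j).subset (fun _ h => h.1)

lemma tS_finite (j : ℕ) : (tS j).Finite :=
  (List.finite_length_eq (Fin 2) j).subset (fun _ h => h.1)

lemma tcard (j : ℕ) : Nat.card ↥(Tset j) = (tS j).ncard := by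
  rw [← Nat.card_coe_set_eq]
  apply Nat.card_congr
  apply Equiv.subtypeEquiv FreeMonoid.toList
  intro w
  constructor
  · rintro ⟨h1, h2, h3⟩
    exact ⟨(length_eq w) ▸ h1, (ZMod.intCast_zmod_eq_zero_iff_dvd _ 8).mpr h2, h3⟩
  · rintro ⟨h1, h2, h3⟩
    exact ⟨(length_eq w).symm ▸ h1, (ZMod.intCast_zmod_eq_zero_iff_dvd _ 8).mp h2, h3⟩

lemma cnt_zero (r : ZMod 8) : cnt 0 r = if r = 0 then 1 else 0 := by
  rw [cnt]
  split
  · rename_i h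
    have : wS 0 r = {[]} := by
      ext l
      constructor
      · rintro ⟨h1, _⟩
        exact List.length_eq_zero_iff.mp h1
      · rintro rfl
        exact ⟨rfl, by simp [h]⟩
    rw [this, Set.ncard_singleton]
  · rename_i h
    have : wS 0 r = ∅ := by
      ext l
      simp only [Set.mem_empty_iff_false, iff_false]
      rintro ⟨h1, h2⟩
      rw [List.length_eq_zero_iff.mp h1] at h2
      exact h (by simpa using h2.symm)
    rw [this, Set.ncard_empty]

lemma cons_inj (a : Fin 2) : Function.Injective (fun l : List (Fin 2) => a :: l) :=
  fun x y h => by injection h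

lemma cnt_succ (j : ℕ) (r : ZMod 8) : cnt (j+1) r = cnt j (r-1) + cnt j (r+1) := by
  have hset : wS (j+1) r = (fun l => (0:Fin 2) :: l) '' wS j (r-1) ∪
      (fun l => (1:Fin 2) :: l) '' wS j (r+1) := by
    ext l
    constructor
    · rintro ⟨h1, h2⟩
      rcases l with _ | ⟨a, t⟩
      · simp at h1
      · have hlt : t.length = j := by simpa using h1
        rw [iwt_cons] at h2
        push_cast at h2
        fin_cases a
        · left
          refine ⟨t, ⟨hlt, ?_⟩, rfl⟩
          rw [show chi ((fun i => i) (⟨0, by norm_num⟩ : Fin 2)) = 1 from rfl] at h2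
          push_cast at h2
          linear_combination h2
        · right
          refine ⟨t, ⟨hlt, ?_⟩, rfl⟩
          rw [show chi ((fun i => i) (⟨1, by norm_num⟩ : Fin 2)) = -1 from rfl] at h2
          push_cast at h2
          linear_combination h2
    · rintro (⟨t, ⟨h1, h2⟩, rfl⟩ | ⟨t, ⟨h1, h2⟩, rfl⟩)
      · refine ⟨by simpa using h1, ?_⟩
        rw [iwt_cons]
        have hc : chi 0 = 1 := rfl
        rw [hc]
        push_cast
        rw [h2]
        ring
      · refine ⟨by simpa using h1, ?_⟩
        rw [iwt_cons]
        have hc : chi 1 = -1 := rfl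
        rw [hc]
        push_cast
        rw [h2]
        ring
  have hdisj : Disjoint ((fun l => (0:Fin 2) :: l) '' wS j (r-1))
      ((fun l => (1:Fin 2) :: l) '' wS j (r+1)) := by
    rw [Set.disjoint_left]
    rintro l ⟨t, _, rfl⟩ ⟨t', _, heq⟩
    simp at heq
  rw [cnt, hset, Set.ncard_union_eq hdisj ((wS_finite j (r-1)).image _)
    ((wS_finite j (r+1)).image _), Set.ncard_image_of_injective _ (cons_inj 0),
    Set.ncard_image_of_injective _ (cons_inj 1)]
  rfl

end DA

namespace DA

lemma iwt_parity (l : List (Fin 2)) : (2:ℤ) ∣ (iwt l - l.length) := by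
  induction l with
  | nil => simp
  | cons a t ih =>
    rw [iwt_cons, List.length_cons]
    have : chi a = 1 ∨ chi a = -1 := by fin_cases a <;> simp [chi]
    push_cast
    rcases this with h | h <;> rw [h] <;> omega

lemma cnt_odd (j : ℕ) (hj : j % 2 = 1) : cnt j 0 = 0 := by
  rw [cnt]
  have : wS j 0 = ∅ := by
    ext l
    simp only [Set.mem_empty_iff_false, iff_false]
    rintro ⟨h1, h2⟩
    have h8 : (8:ℤ) ∣ iwt l := (ZMod.intCast_zmod_eq_zero_iff_dvd _ 8).mp h2
    have hp := iwt_parity l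
    rw [h1] at hp
    have : (j:ℤ) % 2 = 1 := by omega
    omega
  rw [this, Set.ncard_empty]

lemma map_sw_involutive : Function.Involutive (fun l : List (Fin 2) => l.map sw) := by
  intro l
  simp [List.map_map, Function.comp_def]

lemma cnt_eq_two_tS (j : ℕ) : cnt (j+1) 0 = 2 * (tS (j+1)).ncard := by
  have hset : wS (j+1) 0 = tS (j+1) ∪ (fun l : List (Fin 2) => l.map sw) '' tS (j+1) := by
    ext l
    constructor
    · rintro ⟨h1, h2⟩
      rcases hl : l with _ | ⟨a, t⟩
      · rw [hl] at h1; simp at h1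
      · rw [← hl]
        have ha : a = 0 ∨ a = 1 := by fin_cases a <;> simp
        rcases ha with rfl | rfl
        · left
          refine ⟨h1, h2, ?_⟩
          rw [hl]
          simp
        · right
          refine ⟨l.map sw, ⟨by simpa using h1, ?_, ?_⟩, map_sw_involutive l⟩
          · rw [iwt_map_sw]
            push_cast
            rw [h2]
            ring
          · rw [hl]
            simp [sw]
    · rintro (⟨h1, h2, _⟩ | ⟨t, ⟨h1, h2, _⟩, rfl⟩)
      · exact ⟨h1, h2⟩
      · refine ⟨by simpa using h1, ?_⟩
        rw [iwt_map_sw]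
        push_cast
        rw [h2]
        ring
  have hdisj : Disjoint (tS (j+1)) ((fun l : List (Fin 2) => l.map sw) '' tS (j+1)) := by
    rw [Set.disjoint_left]
    rintro l ⟨_, _, hhead⟩ ⟨t, ⟨ht1, _, hthead⟩, rfl⟩
    rcases ht : t with _ | ⟨a, t'⟩
    · rw [ht] at ht1; simp at ht1
    · rw [ht] at hthead
      have ha : a = 0 := by
        fin_cases a
        · rfl
        · simp at hthead
      rw [ht, ha] at hhead
      simp [sw] at hhead
  rw [cnt, hset, Set.ncard_union_eq hdisj (tS_finite (j+1)) ((tS_finite (j+1)).image _),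
    Set.ncard_image_of_injective _ map_sw_involutive.injective]
  ring

lemma tS_zero : (tS 0).ncard = 1 := by
  have : tS 0 = {[]} := by
    ext l
    constructor
    · rintro ⟨h1, _⟩
      exact List.length_eq_zero_iff.mp h1
    · rintro rfl
      refine ⟨rfl, by simp, by simp⟩
  rw [this, Set.ncard_singleton]

end DA

namespace DA

lemma cnt_closed (k : ℕ) :
    cnt (2*k+2) 0 = 4^k + 2^k ∧ cnt (2*k+2) 2 = 4^k ∧
    cnt (2*k+2) 6 = 4^k ∧ cnt (2*k+2) 4 = 4^k - 2^k := by
  induction k with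
  | zero =>
    have h2 : (2*0+2 : ℕ) = 0+1+1 := by ring
    rw [h2]
    refine ⟨?_, ?_, ?_, ?_⟩ <;>
      (simp only [cnt_succ, cnt_zero]; decide)
  | succ k ih =>
    obtain ⟨i0, i2, i6, i4⟩ := ih
    have h2 : (2*(k+1)+2 : ℕ) = (2*k+2)+1+1 := by ring
    have hle : 2^k ≤ 4^k := Nat.pow_le_pow_left (by norm_num) k
    have e4 : (4:ℕ)^(k+1) = 4*4^k := by ring
    have e2 : (2:ℕ)^(k+1) = 2*2^k := by ring
    refine ⟨?_, ?_, ?_, ?_⟩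
    · rw [h2, cnt_succ (2*k+2+1) 0, show (0:ZMod 8)-1 = 7 from by decide,
        show (0:ZMod 8)+1 = 1 from by decide, cnt_succ (2*k+2) 7, cnt_succ (2*k+2) 1,
        show (7:ZMod 8)-1 = 6 from by decide, show (7:ZMod 8)+1 = 0 from by decide,
        show (1:ZMod 8)-1 = 0 from by decide, show (1:ZMod 8)+1 = 2 from by decide,
        i0, i2, i6, e4, e2]
      ring
    · rw [h2, cnt_succ (2*k+2+1) 2, show (2:ZMod 8)-1 = 1 from by decide,
        show (2:ZMod 8)+1 = 3 from by decide, cnt_succ (2*k+2) 1, cnt_succ (2*k+2) 3,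
        show (1:ZMod 8)-1 = 0 from by decide, show (1:ZMod 8)+1 = 2 from by decide,
        show (3:ZMod 8)-1 = 2 from by decide, show (3:ZMod 8)+1 = 4 from by decide,
        i0, i2, i4, e4]
      omega
    · rw [h2, cnt_succ (2*k+2+1) 6, show (6:ZMod 8)-1 = 5 from by decide,
        show (6:ZMod 8)+1 = 7 from by decide, cnt_succ (2*k+2) 5, cnt_succ (2*k+2) 7,
        show (5:ZMod 8)-1 = 4 from by decide, show (5:ZMod 8)+1 = 6 from by decide,
        show (7:ZMod 8)-1 = 6 from by decide, show (7:ZMod 8)+1 = 0 from by decide,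
        i0, i6, i4, e4]
      omega
    · rw [h2, cnt_succ (2*k+2+1) 4, show (4:ZMod 8)-1 = 3 from by decide,
        show (4:ZMod 8)+1 = 5 from by decide, cnt_succ (2*k+2) 3, cnt_succ (2*k+2) 5,
        show (3:ZMod 8)-1 = 2 from by decide, show (3:ZMod 8)+1 = 4 from by decide,
        show (5:ZMod 8)-1 = 4 from by decide, show (5:ZMod 8)+1 = 6 from by decide,
        i2, i6, i4, e4, e2]
      omega

end DA

namespace DA

lemma two_aDim (k : ℕ) : 2 * aDim 8 (2*k+2) = 4^k + 2^k := by
  have h1 : cnt (2*k+1+1) 0 = 2 * (tS (2*k+1+1)).ncard := cnt_eq_two_tS (2*k+1)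
  have h2 := (cnt_closed k).1
  have h3 : (2*k+2 : ℕ) = 2*k+1+1 := by ring
  rw [aDim_eq_card, tcard, h3]
  rw [h3] at h2
  omega

lemma aDim_odd (j : ℕ) (h : j % 2 = 1) : aDim 8 j = 0 := by
  obtain ⟨j', rfl⟩ : ∃ j', j = j'+1 := ⟨j-1, by omega⟩
  have h1 := cnt_eq_two_tS j'
  have h2 := cnt_odd (j'+1) h
  rw [aDim_eq_card, tcard]
  omega

lemma aDim_zero : aDim 8 0 = 1 := by
  rw [aDim_eq_card, tcard, tS_zero]

end DA


/-- For `n = 8`: initial values and linear recurrence for the dimensions of the homogeneous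
components of `ℂ⟨u,v⟩^{D₁₆}`. -/
theorem dihedral_invariants_recurrence_n8 :
    aDim 8 0 = 1 ∧ aDim 8 1 = 0 ∧ aDim 8 2 = 1 ∧ aDim 8 3 = 0 ∧ aDim 8 4 = 3 ∧
      ∀ m : ℕ, 1 ≤ m →
        (aDim 8 (m + 4) : ℤ) = 6 * aDim 8 (m + 2) - 8 * aDim 8 m := by
  have h2 : aDim 8 2 = 1 := by have := DA.two_aDim 0; norm_num at this; omega
  have h4 : aDim 8 4 = 3 := by have := DA.two_aDim 1; norm_num at this; omega
  refine ⟨DA.aDim_zero, DA.aDim_odd 1 rfl, h2, DA.aDim_odd 3 rfl, h4, ?_⟩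
  intro m hm
  rcases Nat.even_or_odd m with he | ho
  · obtain ⟨k, rfl⟩ : ∃ k, m = 2*k+2 := by
      rcases he with ⟨t, ht⟩
      exact ⟨t-1, by omega⟩
    have hA := DA.two_aDim k
    have hB := DA.two_aDim (k+1)
    have hC := DA.two_aDim (k+2)
    rw [show 2*(k+1)+2 = 2*k+2+2 from by ring] at hB
    rw [show 2*(k+2)+2 = 2*k+2+4 from by ring] at hC
    have hA' : (2:ℤ) * aDim 8 (2*k+2) = 4^k + 2^k := by exact_mod_cast hA
    have hB' : (2:ℤ) * aDim 8 (2*k+2+2) = 4^(k+1) + 2^(k+1) := by exact_mod_cast hB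
    have hC' : (2:ℤ) * aDim 8 (2*k+2+4) = 4^(k+2) + 2^(k+2) := by exact_mod_cast hC
    rw [show (4:ℤ)^(k+1) = 4*4^k from by ring, show (2:ℤ)^(k+1) = 2*2^k from by ring] at hB'
    rw [show (4:ℤ)^(k+2) = 16*4^k from by ring, show (2:ℤ)^(k+2) = 4*2^k from by ring] at hC'
    generalize (4:ℤ)^k = A at hA' hB' hC'
    generalize (2:ℤ)^k = B at hA' hB' hC'
    omega
  · have hmo := Nat.odd_iff.mp ho
    have h1 : (m+4) % 2 = 1 := by omega
    have h2 : (m+2) % 2 = 1 := by omega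
    have h3 : m % 2 = 1 := hmo
    rw [DA.aDim_odd _ h1, DA.aDim_odd _ h2, DA.aDim_odd _ h3]
    norm_num

end
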